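/- The following are equivalent: (1) every sup-measurable function f : ℝ×ℝ → ℝ is Lebesgue measurable; (2) for every Lebesgue non-measurable set A ⊆ ℝ×ℝ there exists a Borel function f : ℝ → ℝ such that the set {x ∈ ℝ : (x, f(x)) ∈ A} is not Lebesgue measurable. -/

import Mathlib

open MeasureTheory

/-- A function `f : ℝ × ℝ → ℝ` is sup-measurable if for every Lebesgue measurable
`g : ℝ → ℝ` the superposition `x ↦ f (x, g x)` is Lebesgue measurable.
(Lebesgue measurability = measurability with respect to the completion of
Lebesgue measure, i.e. `NullMeasurable`.) -/
def SupMeasurable (f : ℝ × ℝ → ℝ) : Prop :=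
  ∀ g : ℝ → ℝ, NullMeasurable g volume → NullMeasurable (fun x => f (x, g x)) volume

/-- every sup-measurable function `f : ℝ × ℝ → ℝ` is Lebesgue measurable
iff for every Lebesgue non-measurable set `A ⊆ ℝ × ℝ` there is a Borel function
`f : ℝ → ℝ` such that `{x | (x, f x) ∈ A}` is not Lebesgue measurable. -/
theorem supMeasurable_measurable_iff :
    (∀ f : ℝ × ℝ → ℝ, SupMeasurable f → NullMeasurable f volume) ↔
    (∀ A : Set (ℝ × ℝ), ¬ NullMeasurableSet A volume →
      ∃ f : ℝ → ℝ, Measurable f ∧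
        ¬ NullMeasurableSet {x : ℝ | (x, f x) ∈ A} volume) := by
  constructor
  · -- (1) → (2)
    intro H A hA
    -- the indicator of A is not null measurable
    set F : ℝ × ℝ → ℝ := Set.indicator A (fun _ => 1) with hF
    have hFpre : F ⁻¹' {1} = A := by
      ext p
      simp [hF, Set.indicator_apply]
    have hFnm : ¬ NullMeasurable F volume := by
      intro h
      have := h (MeasurableSet.singleton (1 : ℝ))
      rw [hFpre] at this
      exact hA this
    -- so F is not sup-measurable
    have hFsup : ¬ SupMeasurable F := fun h => hFnm (H F h)
    rw [SupMeasurable] at hFsup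
    push_neg at hFsup
    obtain ⟨g, hg, hgnm⟩ := hFsup
    -- replace g with a measurable modification
    obtain ⟨g', hg'm, hgg'⟩ := hg.aemeasurable
    refine ⟨g', hg'm, fun hB' => ?_⟩
    -- the sets for g and g' agree a.e.
    have hBeq : {x : ℝ | (x, g' x) ∈ A} =ᵐ[volume] {x : ℝ | (x, g x) ∈ A} := by
      filter_upwards [hgg'] with x hx
      show ((x, g' x) ∈ A) = ((x, g x) ∈ A)
      rw [hx]
    have hB : NullMeasurableSet {x : ℝ | (x, g x) ∈ A} volume := hB'.congr hBeq
    -- then x ↦ F (x, g x) would be null measurable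
    apply hgnm
    have : (fun x => F (x, g x)) = Set.indicator {x : ℝ | (x, g x) ∈ A} (fun _ => 1) := by
      ext x
      by_cases hx : (x, g x) ∈ A <;> simp [hF, Set.indicator_apply, hx]
    rw [this]
    intro s hs
    by_cases h1 : (1 : ℝ) ∈ s <;> by_cases h0 : (0 : ℝ) ∈ s
    · have : Set.indicator {x : ℝ | (x, g x) ∈ A} (fun _ => (1:ℝ)) ⁻¹' s = Set.univ := by
        ext x
        by_cases hx : x ∈ {x : ℝ | (x, g x) ∈ A} <;>
          simp [Set.indicator_apply, hx, h1, h0]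
      rw [this]; exact MeasurableSet.univ.nullMeasurableSet
    · have : Set.indicator {x : ℝ | (x, g x) ∈ A} (fun _ => (1:ℝ)) ⁻¹' s
          = {x : ℝ | (x, g x) ∈ A} := by
        ext x
        by_cases hx : x ∈ {x : ℝ | (x, g x) ∈ A} <;>
          simp [Set.indicator_apply, hx, h1, h0]
      rw [this]; exact hB
    · have : Set.indicator {x : ℝ | (x, g x) ∈ A} (fun _ => (1:ℝ)) ⁻¹' s
          = {x : ℝ | (x, g x) ∈ A}ᶜ := by
        ext x
        by_cases hx : x ∈ {x : ℝ | (x, g x) ∈ A} <;>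
          simp [Set.indicator_apply, hx, h1, h0]
      rw [this]; exact hB.compl
    · have : Set.indicator {x : ℝ | (x, g x) ∈ A} (fun _ => (1:ℝ)) ⁻¹' s = ∅ := by
        ext x
        by_cases hx : x ∈ {x : ℝ | (x, g x) ∈ A} <;>
          simp [Set.indicator_apply, hx, h1, h0]
      rw [this]; exact MeasurableSet.empty.nullMeasurableSet
  · -- (2) → (1)
    intro H f hf
    by_contra hfnm
    rw [NullMeasurable] at hfnm
    push_neg at hfnm
    obtain ⟨s, hs, hpre⟩ := hfnm
    obtain ⟨g, hgm, hgnm⟩ := H (f ⁻¹' s) hpre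
    apply hgnm
    have := hf g hgm.nullMeasurable hs
    convert this using 1
    rfl
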